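/- Distance-based characterization of AU: let K=(V,E,ℓ) be a finite Kripke structure with total E and let n = |V|. Then K,x ⊨ A φ U ψ iff there exists a function d : V → {0,1,…,n} such that d(x) < n and for every state y: if d(y) = 0 then K,y ⊨ ψ, and if 1 ≤ d(y) < n then K,y ⊨ φ and every successor y' of y has d(y') < d(y). -/

import Mathlib

/-- `K, x ⊨ A φ U ψ` (structure semantics over infinite paths). -/
def SatAU {V : Type*} (E : V → V → Prop) (φ ψ : V → Prop) (x : V) : Prop :=
  ∀ ρ : ℕ → V, (∀ i, E (ρ i) (ρ (i + 1))) → ρ 0 = x →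
    ∃ i, ψ (ρ i) ∧ ∀ j < i, φ (ρ j)

/-- Iteration of the AU predecessor operator. -/
def Sset {V : Type*} (E : V → V → Prop) (φ ψ : V → Prop) : ℕ → Set V
  | 0 => {y | ψ y}
  | k + 1 => Sset E φ ψ k ∪ {y | φ y ∧ ∀ y', E y y' → y' ∈ Sset E φ ψ k}

lemma Sset_mono_succ {V : Type*} (E : V → V → Prop) (φ ψ : V → Prop) (k : ℕ) :
    Sset E φ ψ k ⊆ Sset E φ ψ (k + 1) := Set.subset_union_left

lemma Sset_mono {V : Type*} (E : V → V → Prop) (φ ψ : V → Prop) {k m : ℕ} (h : k ≤ m) :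
    Sset E φ ψ k ⊆ Sset E φ ψ m := by
  induction m with
  | zero => simp [Nat.le_zero.mp h]
  | succ m ih =>
    rcases Nat.lt_or_ge k (m + 1) with h' | h'
    · exact (ih (Nat.lt_succ_iff.mp h')).trans (Sset_mono_succ E φ ψ m)
    · have : k = m + 1 := le_antisymm h h'
      simp [this]

lemma Sset_fix {V : Type*} (E : V → V → Prop) (φ ψ : V → Prop) {k : ℕ}
    (h : Sset E φ ψ (k + 1) = Sset E φ ψ k) :
    ∀ m, k ≤ m → Sset E φ ψ m = Sset E φ ψ k := by
  intro m hm
  induction m with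
  | zero => simp [Nat.le_zero.mp hm]
  | succ m ih =>
    rcases Nat.lt_or_ge k (m + 1) with h' | h'
    · have hmk : Sset E φ ψ m = Sset E φ ψ k := ih (Nat.lt_succ_iff.mp h')
      calc Sset E φ ψ (m + 1) = Sset E φ ψ m ∪
            {y | φ y ∧ ∀ y', E y y' → y' ∈ Sset E φ ψ m} := rfl
        _ = Sset E φ ψ k ∪ {y | φ y ∧ ∀ y', E y y' → y' ∈ Sset E φ ψ k} := by rw [hmk]
        _ = Sset E φ ψ (k + 1) := rfl
        _ = Sset E φ ψ k := h
    · have : k = m + 1 := le_antisymm hm h'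
      simp [this]

lemma Sset_exists_fix {V : Type*} [Fintype V] [Nonempty V] (E : V → V → Prop)
    (hE : ∀ v, ∃ w, E v w) (φ ψ : V → Prop) :
    ∃ k < Fintype.card V, Sset E φ ψ (k + 1) = Sset E φ ψ k := by
  classical
  set n := Fintype.card V with hn
  have hnpos : 0 < n := Fintype.card_pos
  by_cases h0 : Sset E φ ψ 0 = ∅
  · refine ⟨0, hnpos, ?_⟩
    apply Set.Subset.antisymm
    · intro y hy
      rcases hy with hy | hy
      · exact hy
      · obtain ⟨-, hall⟩ := hy
        obtain ⟨w, hw⟩ := hE y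
        have := hall w hw
        rw [h0] at this
        exact this.elim
    · exact Sset_mono_succ E φ ψ 0
  · by_contra hc
    push_neg at hc
    have hstrict : ∀ k < n, Sset E φ ψ k ⊂ Sset E φ ψ (k + 1) := fun k hk =>
      HasSubset.Subset.ssubset_of_ne (Sset_mono_succ E φ ψ k) (Ne.symm (hc k hk))
    have hcard : ∀ k ≤ n, k + 1 ≤ (Sset E φ ψ k).ncard := by
      intro k hk
      induction k with
      | zero =>
        have : (Sset E φ ψ 0).Nonempty := Set.nonempty_iff_ne_empty.mpr h0
        exact (Set.ncard_pos (Set.toFinite _)).mpr this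
      | succ k ih =>
        have h1 := ih (Nat.le_of_succ_le hk)
        have h2 : (Sset E φ ψ k).ncard < (Sset E φ ψ (k + 1)).ncard :=
          Set.ncard_lt_ncard (hstrict k (Nat.lt_of_succ_le hk)) (Set.toFinite _)
        omega
    have h1 : n + 1 ≤ (Sset E φ ψ n).ncard := hcard n le_rfl
    have h2 : (Sset E φ ψ n).ncard ≤ n := by
      have := Set.ncard_le_ncard (Set.subset_univ (Sset E φ ψ n)) (Set.toFinite _)
      simpa [Set.ncard_univ, Nat.card_eq_fintype_card] using this
    omega

theorem au_distance_characterization {V : Type*} [Fintype V] (E : V → V → Prop)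
    (hE : ∀ v, ∃ w, E v w) (φ ψ : V → Prop) (x : V) :
    SatAU E φ ψ x ↔
      ∃ d : V → ℕ, (∀ y, d y ≤ Fintype.card V) ∧ d x < Fintype.card V ∧
        ∀ y, (d y = 0 → ψ y) ∧
          (1 ≤ d y → d y < Fintype.card V →
            φ y ∧ ∀ y', E y y' → d y' < d y) := by
  classical
  have : Nonempty V := ⟨x⟩
  set n := Fintype.card V with hn
  have hnpos : 0 < n := Fintype.card_pos
  constructor
  · intro hsat
    obtain ⟨k0, hk0n, hfixeq⟩ := Sset_exists_fix E hE φ ψ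
    have hk0fix := Sset_fix E φ ψ hfixeq
    set S := Sset E φ ψ with hS
    set T := S k0 with hT
    -- key: x ∈ T
    have hpsiT : ∀ y, ψ y → y ∈ T := fun y hy =>
      Sset_mono E φ ψ (Nat.zero_le k0) hy
    have hescape : ∀ y, y ∉ T → φ y → ∃ y', E y y' ∧ y' ∉ T := by
      intro y hyT hyφ
      have : y ∉ S (k0 + 1) := by rw [hk0fix (k0+1) (Nat.le_succ _)]; exact hyT
      simp only [hS, Sset, Set.mem_union, Set.mem_setOf_eq, not_or, not_and] at this
      push_neg at this
      obtain ⟨-, h2⟩ := this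
      obtain ⟨y', hy', hy'T⟩ := h2 hyφ
      exact ⟨y', hy', hy'T⟩
    have hxT : x ∈ T := by
      by_contra hxT
      -- construct a bad path
      let next : V → V := fun y =>
        if h : ∃ y', E y y' ∧ y' ∉ T then h.choose else (hE y).choose
      have hnextE : ∀ y, E y (next y) := by
        intro y
        by_cases h : ∃ y', E y y' ∧ y' ∉ T
        · simp only [next, dif_pos h]; exact h.choose_spec.1
        · simp only [next, dif_neg h]; exact (hE y).choose_spec
      have hnextT : ∀ y, y ∉ T → φ y → next y ∉ T := by
        intro y hyT hyφ
        have h := hescape y hyT hyφ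
        simp only [next, dif_pos h]
        exact h.choose_spec.2
      let ρ : ℕ → V := fun i => Nat.rec x (fun _ y => next y) i
      have hρ0 : ρ 0 = x := rfl
      have hρstep : ∀ i, ρ (i + 1) = next (ρ i) := fun i => rfl
      have hρE : ∀ i, E (ρ i) (ρ (i + 1)) := fun i => hnextE (ρ i)
      have hinv : ∀ i, (∀ j < i, φ (ρ j)) → ρ i ∉ T := by
        intro i
        induction i with
        | zero => intro _; simpa [hρ0] using hxT
        | succ i ih =>
          intro hφ
          have h1 : ρ i ∉ T := ih (fun j hj => hφ j (Nat.lt_succ_of_lt hj))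
          have h2 : φ (ρ i) := hφ i (Nat.lt_succ_self i)
          rw [hρstep]
          exact hnextT (ρ i) h1 h2
      obtain ⟨i, hψi, hφi⟩ := hsat ρ hρE hρ0
      exact hinv i hφi (hpsiT _ hψi)
    -- define d
    let d : V → ℕ := fun y => if h : ∃ k, y ∈ S k then Nat.find h else n
    have hd_lt : ∀ y (h : ∃ k, y ∈ S k), d y ≤ k0 := by
      intro y h
      obtain ⟨k, hk⟩ := h
      have : ∃ j ≤ k0, y ∈ S j := by
        rcases le_or_gt k k0 with h' | h'
        · exact ⟨k, h', hk⟩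
        · refine ⟨k0, le_rfl, ?_⟩
          have heq := hk0fix k h'.le
          rw [heq] at hk
          exact hk
      obtain ⟨j, hj, hyj⟩ := this
      simp only [d, dif_pos (⟨k, hk⟩ : ∃ k, y ∈ S k)]
      exact le_trans (Nat.find_le hyj) hj
    refine ⟨d, ?_, ?_, ?_⟩
    · intro y
      by_cases h : ∃ k, y ∈ S k
      · exact le_trans (hd_lt y h) (le_of_lt hk0n)
      · simp [d, dif_neg h]
    · exact lt_of_le_of_lt (hd_lt x ⟨k0, hxT⟩) hk0n
    · intro y
      constructor
      · intro hdy0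
        by_cases h : ∃ k, y ∈ S k
        · have : Nat.find h = 0 := by simpa [d, dif_pos h] using hdy0
          have hy0 : y ∈ S 0 := this ▸ Nat.find_spec h
          exact hy0
        · exfalso
          have : d y = n := by simp [d, dif_neg h]
          omega
      · intro hdy1 hdyn
        by_cases h : ∃ k, y ∈ S k
        · have hdef : d y = Nat.find h := by simp [d, dif_pos h]
          rw [hdef] at hdy1 hdyn ⊢
          set m := Nat.find h with hm
          have hmem : y ∈ S m := Nat.find_spec h
          have hnot : y ∉ S (m - 1) := Nat.find_min h (show m - 1 < m by omega)
          have hms : m = (m - 1) + 1 := by omega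
          rw [hms] at hmem
          rcases hmem with hmem | hmem
          · exact absurd hmem hnot
          · obtain ⟨hφy, hsucc⟩ := hmem
            refine ⟨hφy, fun y' hy' => ?_⟩
            have hy'S : y' ∈ S (m - 1) := hsucc y' hy'
            have : d y' ≤ m - 1 := by
              simp only [d, dif_pos (⟨m - 1, hy'S⟩ : ∃ k, y' ∈ S k)]
              exact Nat.find_le hy'S
            omega
        · exfalso
          have : d y = n := by simp [d, dif_neg h]
          omega
  · rintro ⟨d, hdle, hdx, hd⟩
    have key : ∀ k, ∀ ρ : ℕ → V, (∀ i, E (ρ i) (ρ (i + 1))) →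
        d (ρ 0) ≤ k → d (ρ 0) < n → ∃ i, ψ (ρ i) ∧ ∀ j < i, φ (ρ j) := by
      intro k
      induction k with
      | zero =>
        intro ρ hρ hk hlt
        have : d (ρ 0) = 0 := Nat.le_zero.mp hk
        exact ⟨0, (hd (ρ 0)).1 this, fun j hj => absurd hj (Nat.not_lt_zero j)⟩
      | succ k ih =>
        intro ρ hρ hk hlt
        by_cases h0 : d (ρ 0) = 0
        · exact ⟨0, (hd (ρ 0)).1 h0, fun j hj => absurd hj (Nat.not_lt_zero j)⟩
        · have h1 : 1 ≤ d (ρ 0) := Nat.one_le_iff_ne_zero.mpr h0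
          obtain ⟨hφ0, hsucc⟩ := (hd (ρ 0)).2 h1 hlt
          have hd1 : d (ρ 1) < d (ρ 0) := hsucc (ρ 1) (hρ 0)
          obtain ⟨i, hψi, hφi⟩ := ih (fun i => ρ (i + 1)) (fun i => hρ (i + 1))
            (show d (ρ 1) ≤ k by omega) (show d (ρ 1) < n by omega)
          refine ⟨i + 1, hψi, fun j hj => ?_⟩
          cases j with
          | zero => exact hφ0
          | succ j => exact hφi j (by omega)
    intro ρ hρ hρ0
    exact key n ρ hρ (by rw [hρ0]; omega) (by rw [hρ0]; exact hdx)
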